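/- arXiv:2107.06714 — 2 statements merged into one kernel-verified Lean document; each statement's English description precedes it below -/
import Mathlib

section
/- Consider the two-stage linear evaluation function g(x,z) = cᵀx + min{dᵀy : y ∈ ℝ^{n_y}, By ≥ f(x) + F(x)z} with ℓ₁-norm penalty p(z) = ‖z‖₁ and polyhedral support Z = {z : Hz ≤ h}, h ≥ 0, under complete and bounded recourse for the linear system (for every v there exists y with By ≥ v, and no y satisfies By ≥ 0 with dᵀy < 0). Let Ȳ_P = {(x,υ,k) ∈ X × ℝ × ℝ₊ : ∃ q ∈ ℝ^{n_y}, Q ∈ ℝ^{n_y×n_z}, q† ∈ ℝ^{n_y} such that cᵀx + dᵀ(q + Qz + q†‖z‖₁) − k‖z‖₁ ≤ υ for all z ∈ Z; B(q + Qz + q†‖z‖₁) ≥ f(x) + F(x)z for all z ∈ Z; k − dᵀq† ≥ 0; Bq† ≥ 0}. Then: (i) Ȳ_P ⊆ Y, where Y = {(x,υ,k) ∈ X × ℝ × ℝ₊ : ∃ y : ℝ^{n_z} → ℝ^{n_y} with cᵀx + dᵀy(z) − k‖z‖₁ ≤ υ and By(z) ≥ f(x) + F(x)z for all z ∈ Z};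 (ii) for every x ∈ X and every υ > g(x,0) there exists k ≥ 0 with (x,υ,k) ∈ Ȳ_P; and (iii) Ȳ_P admits the explicit representation Ȳ_P = {(x,υ,k) ∈ X × ℝ × ℝ₊ : ∃ q, Q, q† and w⁰, w¹, …, w^{n_f} ∈ ℝ^{n_h}₊ such that cᵀx + dᵀq + hᵀw⁰ ≤ υ; −(k − dᵀq†)·1 ≤ Hᵀw⁰ − Qᵀd ≤ (k − dᵀq†)·1; f_i(x) + hᵀwⁱ ≤ B_i q for all i ∈ [n_f]; and −(B_i q†)·1 ≤ Hᵀwⁱ − F_i(x)ᵀ + QᵀB_iᵀ ≤ (B_i q†)·1 for all i ∈ [n_f]}. -/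
open Matrix

section Cone
variable {E : Type*} [NormedAddCommGroup E] [NormedSpace ℝ E]
variable {ι : Type*} [Fintype ι] [DecidableEq ι]

/-- The conical hull of a finite family. -/
def coneSet (v : ι → E) : Set E := {x | ∃ y : ι → ℝ, 0 ≤ y ∧ x = ∑ i, y i • v i}

lemma coneSet_convex (v : ι → E) : Convex ℝ (coneSet v) := by
  rintro x ⟨y, hy, rfl⟩ x' ⟨y', hy', rfl⟩ a b ha hb _
  refine ⟨fun i => a * y i + b * y' i, ?_, ?_⟩
  · intro i
    have h1 : (0:ℝ) ≤ y i := hy i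
    have h2 : (0:ℝ) ≤ y' i := hy' i
    have : (0:ℝ) ≤ a * y i + b * y' i := by positivity
    exact this
  · simp only [Finset.smul_sum, ← Finset.sum_add_distrib, add_smul, mul_smul]

lemma zero_mem_coneSet (v : ι → E) : (0 : E) ∈ coneSet v :=
  ⟨0, le_refl _, by simp⟩

lemma smul_generator_mem_coneSet (v : ι → E) (i : ι) {t : ℝ} (ht : 0 ≤ t) :
    t • v i ∈ coneSet v := by
  refine ⟨fun j => if j = i then t else 0, fun j => by dsimp; split <;> simp [ht], ?_⟩
  rw [Finset.sum_eq_single i]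
  · simp
  · intro b _ hb; simp [hb]
  · simp

lemma isClosed_coneSet_of_li {v : ι → E} (hv : LinearIndependent ℝ v) :
    IsClosed (coneSet v) := by
  set L : (ι → ℝ) →ₗ[ℝ] E := Fintype.linearCombination ℝ v with hL
  have hker : LinearMap.ker L = ⊥ := by
    rw [LinearMap.ker_eq_bot']
    intro g hg
    have : ∑ i, g i • v i = 0 := by
      simpa [hL, Fintype.linearCombination_apply] using hg
    by_contra hne
    exact (Fintype.not_linearIndependent_iff.mpr
      ⟨g, this, Function.ne_iff.mp hne⟩) hv
  have hemb := LinearMap.isClosedEmbedding_of_injective (f := L) hker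
  have : coneSet v = L '' (Set.Ici 0) := by
    ext x
    constructor
    · rintro ⟨y, hy, rfl⟩
      exact ⟨y, hy, by simp [hL, Fintype.linearCombination_apply]⟩
    · rintro ⟨y, hy, rfl⟩
      exact ⟨y, hy, by simp [hL, Fintype.linearCombination_apply]⟩
  rw [this]
  exact hemb.isClosedMap _ isClosed_Ici

/-- Carathéodory for cones: every point of the cone lies in the cone of a
linearly independent subfamily. -/
lemma coneSet_caratheodory (v : ι → E) (x : E) (hx : x ∈ coneSet v) :
    ∃ T : Finset ι, LinearIndependent ℝ (fun i : T => v i) ∧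
      x ∈ coneSet (fun i : T => v i) := by
  obtain ⟨y, hy, rfl⟩ := hx
  -- strengthen: induct on supports
  suffices H : ∀ (N : ℕ) (T : Finset ι) (y : ι → ℝ), T.card ≤ N → 0 ≤ y →
      (∀ i ∉ T, y i = 0) →
      ∃ T' : Finset ι, LinearIndependent ℝ (fun i : T' => v i) ∧
        (∑ i, y i • v i) ∈ coneSet (fun i : T' => v i) by
    exact H (Finset.univ.card) Finset.univ y le_rfl hy (by simp)
  intro N
  induction N with
  | zero =>
    intro T y hcard hy hsupp
    have hT : T = ∅ := Finset.card_eq_zero.mp (Nat.le_zero.mp hcard)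
    have : ∀ i, y i = 0 := fun i => hsupp i (by simp [hT])
    refine ⟨∅, linearIndependent_empty_type, ?_⟩
    have : ∑ i, y i • v i = 0 := by simp [this]
    rw [this]; exact zero_mem_coneSet _
  | succ N ih =>
    intro T y hcard hy hsupp
    by_cases hli : LinearIndependent ℝ (fun i : T => v i)
    · refine ⟨T, hli, ⟨fun i => y i, fun i => hy i, ?_⟩⟩
      rw [show (∑ i : T, y i • v i) = ∑ i ∈ T, y i • v i by
        rw [Finset.univ_eq_attach]; exact Finset.sum_attach T (fun i => y i • v i)]
      exact (Finset.sum_subset (Finset.subset_univ T)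
        (fun i _ hi => by simp [hsupp i hi])).symm
    · obtain ⟨g, hg0, i₀, hgi₀⟩ := Fintype.not_linearIndependent_iff.mp hli
      -- extend g to ι
      set G : ι → ℝ := fun i => if hi : i ∈ T then g ⟨i, hi⟩ else 0 with hG
      have hGsum : ∑ i, G i • v i = 0 := by
        rw [← Finset.sum_subset (Finset.subset_univ T)
          (fun i _ hi => by simp [hG, hi])]
        rw [← Finset.sum_attach T (fun i => G i • v i), ← Finset.univ_eq_attach]
        simpa [hG] using hg0
      have hGsupp : ∀ i ∉ T, G i = 0 := fun i hi => by simp [hG, hi]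
      have hGne : G (i₀ : ι) ≠ 0 := by simp [hG, i₀.2, hgi₀]
      -- WLOG some positive coefficient: pick d = ±G
      have key : ∀ d : ι → ℝ, (∑ i, d i • v i = 0) → (∀ i ∉ T, d i = 0) →
          (∃ i ∈ T, 0 < d i) →
          ∃ T' : Finset ι, LinearIndependent ℝ (fun i : T' => v i) ∧
            (∑ i, y i • v i) ∈ coneSet (fun i : T' => v i) := by
        intro d hdsum hdsupp ⟨iP, hiPT, hiP⟩
        set P : Finset ι := T.filter (fun i => 0 < d i) with hP
        have hPne : P.Nonempty := ⟨iP, by simp [hP, hiPT, hiP]⟩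
        obtain ⟨i₁, hi₁P, hi₁min⟩ := P.exists_min_image (fun i => y i / d i) hPne
        have hi₁T : i₁ ∈ T := (Finset.mem_filter.mp hi₁P).1
        have hdi₁ : 0 < d i₁ := (Finset.mem_filter.mp hi₁P).2
        set t : ℝ := y i₁ / d i₁ with htdef
        have ht : 0 ≤ t := div_nonneg (hy i₁) hdi₁.le
        set y' : ι → ℝ := fun i => y i - t * d i with hy'
        have hy'0 : 0 ≤ y' := by
          intro i
          have hyi : (0:ℝ) ≤ y i := hy i
          show (0:ℝ) ≤ y i - t * d i
          rcases le_or_gt (d i) 0 with hd | hd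
          · have : t * d i ≤ 0 := mul_nonpos_of_nonneg_of_nonpos ht hd
            linarith
          · have hiT : i ∈ T := by
              by_contra hiT; exact absurd (hdsupp i hiT) (by linarith)
            have hiP : i ∈ P := by simp [hP, hiT, hd]
            have := hi₁min i hiP
            have : t * d i ≤ y i := by
              rw [htdef]
              calc (y i₁ / d i₁) * d i ≤ (y i / d i) * d i := by
                    exact mul_le_mul_of_nonneg_right this hd.le
                _ = y i := div_mul_cancel₀ _ hd.ne'
            linarith
        have hy'i₁ : y' i₁ = 0 := by
          simp [hy', htdef, div_mul_cancel₀ _ hdi₁.ne']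
        have hy'supp : ∀ i ∉ T.erase i₁, y' i = 0 := by
          intro i hi
          by_cases hii : i = i₁
          · subst hii; exact hy'i₁
          · have hiT : i ∉ T := fun hT => hi (Finset.mem_erase.mpr ⟨hii, hT⟩)
            simp [hy', hsupp i hiT, hdsupp i hiT]
        have hsum : ∑ i, y i • v i = ∑ i, y' i • v i := by
          rw [eq_comm]
          calc ∑ i, y' i • v i = ∑ i, (y i • v i - t • (d i • v i)) := by
                refine Finset.sum_congr rfl fun i _ => ?_
                show (y i - t * d i) • v i = _
                rw [sub_smul, mul_smul]
            _ = ∑ i, y i • v i - t • ∑ i, d i • v i := by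
                rw [Finset.sum_sub_distrib, Finset.smul_sum]
            _ = ∑ i, y i • v i := by rw [hdsum, smul_zero, sub_zero]
        rw [hsum]
        exact ih (T.erase i₁) y'
          (by have := Finset.card_erase_of_mem hi₁T; omega) hy'0 hy'supp
      rcases lt_or_gt_of_ne hGne with hneg | hpos
      · exact key (-G) (by simpa using hGsum) (fun i hi => by simp [hGsupp i hi])
          ⟨i₀, i₀.2, by simpa using hneg⟩
      · exact key G hGsum hGsupp ⟨i₀, i₀.2, hpos⟩

lemma coneSet_subtype_subset (v : ι → E) (T : Finset ι) :
    coneSet (fun i : T => v i) ⊆ coneSet v := by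
  rintro x ⟨y, hy, rfl⟩
  refine ⟨fun i => if hi : i ∈ T then y ⟨i, hi⟩ else 0, ?_, ?_⟩
  · intro i; dsimp; split
    · exact hy _
    · exact le_refl _
  · rw [← Finset.sum_subset (Finset.subset_univ T)
      (fun i _ hi => by simp [hi])]
    rw [← Finset.sum_attach T (fun i => (if hi : i ∈ T then y ⟨i, hi⟩ else 0) • v i),
      ← Finset.univ_eq_attach]
    refine Finset.sum_congr rfl fun i _ => ?_
    simp [i.2]

theorem isClosed_coneSet (v : ι → E) : IsClosed (coneSet v) := by
  have : coneSet v = ⋃ (T : Finset ι) (_ : LinearIndependent ℝ (fun i : T => v i)),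
      coneSet (fun i : T => v i) := by
    apply Set.Subset.antisymm
    · intro x hx
      obtain ⟨T, hT, hxT⟩ := coneSet_caratheodory v x hx
      exact Set.mem_iUnion₂.mpr ⟨T, hT, hxT⟩
    · intro x hx
      obtain ⟨T, _, hxT⟩ := Set.mem_iUnion₂.mp hx
      exact coneSet_subtype_subset v T hxT
  rw [this]
  exact isClosed_iUnion_of_finite fun T =>
    isClosed_iUnion_of_finite fun hT => isClosed_coneSet_of_li hT

end Cone

set_option maxHeartbeats 1000000 in
/-- Affine Farkas lemma / strong LP duality (feasible & bounded case). -/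
theorem farkas_affine {m n : Type*} [Fintype m] [Fintype n] [DecidableEq m] [DecidableEq n]
    (A : Matrix m n ℝ) (b : m → ℝ) (c : n → ℝ) (β : ℝ)
    (hfeas : ∃ x, A.mulVec x ≤ b) (hbdd : ∀ x, A.mulVec x ≤ b → c ⬝ᵥ x ≤ β) :
    ∃ y : m → ℝ, 0 ≤ y ∧ Aᵀ.mulVec y = c ∧ b ⬝ᵥ y ≤ β := by
  classical
  set w : (m ⊕ Unit) → ((n → ℝ) × ℝ) :=
    Sum.elim (fun i => (A i, b i)) (fun _ => (0, 1)) with hw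
  by_cases hmem : ((c, β) : (n → ℝ) × ℝ) ∈ coneSet w
  · obtain ⟨y, hy, hsum⟩ := hmem
    rw [Fintype.sum_sum_type] at hsum
    have h1 : c = ∑ i : m, y (Sum.inl i) • A i := by
      have := congrArg Prod.fst hsum
      simpa [hw, Prod.fst_sum] using this
    have h2 : β = (∑ i : m, y (Sum.inl i) * b i) + y (Sum.inr ()) := by
      have := congrArg Prod.snd hsum
      simpa [hw, Prod.snd_sum] using this
    refine ⟨fun i => y (Sum.inl i), fun i => hy _, ?_, ?_⟩
    · funext j
      rw [h1]
      simp [Matrix.mulVec, dotProduct, Finset.sum_apply, mul_comm]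
    · have hb : b ⬝ᵥ (fun i => y (Sum.inl i)) = ∑ i : m, y (Sum.inl i) * b i := by
        simp [dotProduct, mul_comm]
      rw [hb, h2]
      have h0 : (0:ℝ) ≤ y (Sum.inr ()) := hy _
      linarith
  · exfalso
    obtain ⟨l, u, hlt, hgt⟩ := geometric_hahn_banach_closed_point
      (coneSet_convex w) (isClosed_coneSet w) hmem
    have hu0 : 0 < u := by
      have := hlt 0 (zero_mem_coneSet w)
      simpa using this
    have hgen : ∀ i, l (w i) ≤ 0 := by
      intro i
      by_contra hpos
      push_neg at hpos
      have hmem' := smul_generator_mem_coneSet w i (t := u / l (w i)) (by positivity)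
      have := hlt _ hmem'
      rw [_root_.map_smul] at this
      simp only [smul_eq_mul] at this
      rw [div_mul_cancel₀ _ (ne_of_gt hpos)] at this
      exact lt_irrefl u this
    set x0 : n → ℝ := fun j => l (Pi.single j 1, 0) with hx0
    set γ : ℝ := l (0, 1) with hγ
    have hγ0 : γ ≤ 0 := hgen (Sum.inr ())
    have hdecomp : ∀ (v : n → ℝ) (s : ℝ),
        l (v, s) = (∑ j, v j * x0 j) + s * γ := by
      intro v s
      have hvs : ((v, s) : (n → ℝ) × ℝ)
          = (∑ j, v j • ((Pi.single j 1 : n → ℝ), (0:ℝ))) + s • ((0 : n → ℝ), (1:ℝ)) := by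
        have hsingle : ∀ j, v j • ((Pi.single j 1 : n → ℝ), (0:ℝ))
            = ((Pi.single j (v j) : n → ℝ), (0:ℝ)) := by
          intro j
          apply Prod.ext
          · show v j • (Pi.single j 1 : n → ℝ) = _
            rw [← Pi.single_smul]; simp
          · simp
        apply Prod.ext
        · simp only [hsingle, Prod.fst_add, Prod.fst_sum, Prod.smul_fst, smul_eq_mul]
          simp [Finset.univ_sum_single]
        · simp only [hsingle, Prod.snd_add, Prod.snd_sum, Prod.smul_snd, smul_eq_mul]
          simp
      rw [hvs, map_add, map_sum, _root_.map_smul]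
      simp only [smul_eq_mul]
      congr 1
      exact Finset.sum_congr rfl fun j _ => by rw [_root_.map_smul]; simp [hx0]
    have hrow : ∀ i : m, A.mulVec x0 i + γ * b i ≤ 0 := by
      intro i
      have := hgen (Sum.inl i)
      rw [hw] at this
      simp only [Sum.elim_inl] at this
      rw [hdecomp (A i) (b i)] at this
      have heq : A.mulVec x0 i = ∑ j, A i j * x0 j := rfl
      rw [heq]; linarith
    have hobj : 0 < c ⬝ᵥ x0 + β * γ := by
      have h1 := hgt
      rw [hdecomp c β] at h1
      have heq : c ⬝ᵥ x0 = ∑ j, c j * x0 j := rfl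
      rw [heq]; linarith
    rcases eq_or_lt_of_le hγ0 with hγeq | hγlt
    · -- γ = 0 : recession direction
      obtain ⟨xb, hxb⟩ := hfeas
      have hAx0 : ∀ i, A.mulVec x0 i ≤ 0 := fun i => by
        have := hrow i; rw [hγeq] at this; linarith
      have hcx0 : 0 < c ⬝ᵥ x0 := by rw [hγeq] at hobj; linarith
      set t : ℝ := max 0 ((β + 1 - c ⬝ᵥ xb) / (c ⬝ᵥ x0)) with htd
      have ht0 : 0 ≤ t := le_max_left _ _
      have hfeas2 : A.mulVec (xb + t • x0) ≤ b := by
        intro i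
        rw [Matrix.mulVec_add, Matrix.mulVec_smul]
        have : t • A.mulVec x0 i ≤ 0 :=
          smul_nonpos_of_nonneg_of_nonpos ht0 (hAx0 i)
        have hxbi := hxb i
        simp only [Pi.add_apply, Pi.smul_apply] at *
        linarith
      have hval := hbdd _ hfeas2
      rw [dotProduct_add, dotProduct_smul] at hval
      have ht2 : (β + 1 - c ⬝ᵥ xb) / (c ⬝ᵥ x0) ≤ t := le_max_right _ _
      have : β + 1 - c ⬝ᵥ xb ≤ t * (c ⬝ᵥ x0) := by
        rw [← div_le_iff₀ hcx0]; exact ht2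
      simp only [smul_eq_mul] at hval
      linarith
    · -- γ < 0 : scale
      set x1 : n → ℝ := (-γ)⁻¹ • x0 with hx1
      have hnγ : 0 < -γ := by linarith
      have hfeas1 : A.mulVec x1 ≤ b := by
        intro i
        rw [hx1, Matrix.mulVec_smul]
        have := hrow i
        have h2 : A.mulVec x0 i ≤ (-γ) * b i := by linarith
        simp only [Pi.smul_apply, smul_eq_mul]
        rw [inv_mul_le_iff₀ hnγ]
        linarith
      have hval := hbdd _ hfeas1
      rw [hx1, dotProduct_smul] at hval
      simp only [smul_eq_mul] at hval
      rw [inv_mul_le_iff₀ hnγ] at hval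
      nlinarith

/-- Weak direction: a dual certificate implies the robust constraint. -/
theorem robust_l1_weak {nz nh : ℕ} (H : Matrix (Fin nh) (Fin nz) ℝ) (h : Fin nh → ℝ)
    (a : Fin nz → ℝ) (s b : ℝ)
    (w : Fin nh → ℝ) (hw : 0 ≤ w) (hwb : h ⬝ᵥ w ≤ b)
    (hws : ∀ j, |a j - Hᵀ.mulVec w j| ≤ s) :
    ∀ z : Fin nz → ℝ, H.mulVec z ≤ h → a ⬝ᵥ z - s * (∑ j, |z j|) ≤ b := by
  intro z hz
  have key1 : Hᵀ.mulVec w ⬝ᵥ z ≤ h ⬝ᵥ w := by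
    rw [Matrix.mulVec_transpose, ← Matrix.dotProduct_mulVec]
    calc w ⬝ᵥ H.mulVec z ≤ w ⬝ᵥ h := by
          apply Finset.sum_le_sum
          intro i _
          exact mul_le_mul_of_nonneg_left (hz i) (hw i)
      _ = h ⬝ᵥ w := dotProduct_comm _ _
  have key2 : (a - Hᵀ.mulVec w) ⬝ᵥ z ≤ s * ∑ j, |z j| := by
    rw [Finset.mul_sum]
    apply Finset.sum_le_sum
    intro j _
    calc (a - Hᵀ.mulVec w) j * z j ≤ |(a - Hᵀ.mulVec w) j * z j| := le_abs_self _
      _ = |a j - Hᵀ.mulVec w j| * |z j| := by rw [abs_mul]; rfl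
      _ ≤ s * |z j| := mul_le_mul_of_nonneg_right (hws j) (abs_nonneg _)
  have : a ⬝ᵥ z = Hᵀ.mulVec w ⬝ᵥ z + (a - Hᵀ.mulVec w) ⬝ᵥ z := by
    rw [← add_dotProduct]; simp
  linarith

/-- Strong direction: the robust constraint yields a dual certificate. -/
theorem robust_l1_dual {nz nh : ℕ} (H : Matrix (Fin nh) (Fin nz) ℝ) (h : Fin nh → ℝ)
    (hZne : ∃ z : Fin nz → ℝ, H.mulVec z ≤ h)
    (a : Fin nz → ℝ) (s b : ℝ) (hs : 0 ≤ s)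
    (hrob : ∀ z : Fin nz → ℝ, H.mulVec z ≤ h → a ⬝ᵥ z - s * (∑ j, |z j|) ≤ b) :
    ∃ w : Fin nh → ℝ, 0 ≤ w ∧ h ⬝ᵥ w ≤ b ∧ ∀ j, |a j - Hᵀ.mulVec w j| ≤ s := by
  classical
  set M : Matrix (Fin nh ⊕ (Fin nz ⊕ Fin nz)) (Fin nz ⊕ Fin nz) ℝ :=
    Matrix.of (fun r q =>
      match r, q with
      | Sum.inl i, Sum.inl j => H i j
      | Sum.inl _, Sum.inr _ => 0
      | Sum.inr (Sum.inl i), Sum.inl j => if i = j then 1 else 0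
      | Sum.inr (Sum.inl i), Sum.inr j => if i = j then -1 else 0
      | Sum.inr (Sum.inr i), Sum.inl j => if i = j then -1 else 0
      | Sum.inr (Sum.inr i), Sum.inr j => if i = j then -1 else 0) with hM
  set b' : Fin nh ⊕ (Fin nz ⊕ Fin nz) → ℝ := Sum.elim h 0 with hb'
  set c' : Fin nz ⊕ Fin nz → ℝ := Sum.elim a (fun _ => -s) with hc'
  have hmv1 : ∀ (x : Fin nz ⊕ Fin nz → ℝ) (i : Fin nh),
      M.mulVec x (Sum.inl i) = H.mulVec (x ∘ Sum.inl) i := by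
    intro x i
    simp [hM, Matrix.mulVec, dotProduct, Fintype.sum_sum_type]
  have hmv2 : ∀ (x : Fin nz ⊕ Fin nz → ℝ) (i : Fin nz),
      M.mulVec x (Sum.inr (Sum.inl i)) = x (Sum.inl i) - x (Sum.inr i) := by
    intro x i
    simp [hM, Matrix.mulVec, dotProduct, Fintype.sum_sum_type, ite_mul,
      sub_eq_add_neg]
  have hmv3 : ∀ (x : Fin nz ⊕ Fin nz → ℝ) (i : Fin nz),
      M.mulVec x (Sum.inr (Sum.inr i)) = - x (Sum.inl i) - x (Sum.inr i) := by
    intro x i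
    simp [hM, Matrix.mulVec, dotProduct, Fintype.sum_sum_type, ite_mul,
      sub_eq_add_neg]
  have hfeas : ∃ x, M.mulVec x ≤ b' := by
    obtain ⟨z0, hz0⟩ := hZne
    refine ⟨Sum.elim z0 (fun j => |z0 j|), ?_⟩
    rintro (i | i | i)
    · rw [hmv1]; simpa [hb'] using hz0 i
    · rw [hmv2]; simp only [hb', Sum.elim_inr, Pi.zero_apply, Sum.elim_inl, sub_nonpos]
      exact le_abs_self _
    · rw [hmv3]; simp [hb']
      have := neg_abs_le (z0 i); linarith
  have hbdd : ∀ x, M.mulVec x ≤ b' → c' ⬝ᵥ x ≤ b := by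
    intro x hx
    set z : Fin nz → ℝ := x ∘ Sum.inl with hzdef
    set t : Fin nz → ℝ := x ∘ Sum.inr with htdef
    have hz : H.mulVec z ≤ h := by
      intro i
      have := hx (Sum.inl i)
      rwa [hmv1, show b' (Sum.inl i) = h i from rfl] at this
    have habs : ∀ i, |z i| ≤ t i := by
      intro i
      have h1 := hx (Sum.inr (Sum.inl i))
      have h2 := hx (Sum.inr (Sum.inr i))
      rw [hmv2, show b' (Sum.inr (Sum.inl i)) = 0 from rfl] at h1
      rw [hmv3, show b' (Sum.inr (Sum.inr i)) = 0 from rfl] at h2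
      rw [abs_le]
      constructor
      · show -(x (Sum.inr i)) ≤ x (Sum.inl i)
        linarith
      · show x (Sum.inl i) ≤ x (Sum.inr i)
        linarith
    have hc'x : c' ⬝ᵥ x = a ⬝ᵥ z - s * ∑ i, t i := by
      simp [hc', dotProduct, Fintype.sum_sum_type, hzdef, htdef,
        Finset.mul_sum, sub_eq_add_neg, ← Finset.sum_neg_distrib]
    have hzb := hrob z hz
    have hst : s * ∑ i, |z i| ≤ s * ∑ i, t i :=
      mul_le_mul_of_nonneg_left (Finset.sum_le_sum fun i _ => habs i) hs
    rw [hc'x]; linarith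
  obtain ⟨y, hy, hMt, hby⟩ := farkas_affine M b' c' b hfeas hbdd
  set w : Fin nh → ℝ := y ∘ Sum.inl with hwdef
  set α : Fin nz → ℝ := fun i => y (Sum.inr (Sum.inl i)) with hα
  set βv : Fin nz → ℝ := fun i => y (Sum.inr (Sum.inr i)) with hβ
  have e1 : ∀ j, Mᵀ.mulVec y (Sum.inl j) = Hᵀ.mulVec w j + α j - βv j := by
    intro j
    simp [hM, Matrix.mulVec, dotProduct, Matrix.transpose_apply,
      Fintype.sum_sum_type, ite_mul, hwdef, hα, hβ, sub_eq_add_neg]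
    ring
  have e2 : ∀ j, Mᵀ.mulVec y (Sum.inr j) = - α j - βv j := by
    intro j
    simp [hM, Matrix.mulVec, dotProduct, Matrix.transpose_apply,
      Fintype.sum_sum_type, ite_mul, hα, hβ, sub_eq_add_neg]
  refine ⟨w, fun i => hy _, ?_, ?_⟩
  · have : b' ⬝ᵥ y = h ⬝ᵥ w := by
      simp [hb', dotProduct, Fintype.sum_sum_type, hwdef]
    rw [← this]; exact hby
  · intro j
    have h1 : Hᵀ.mulVec w j + α j - βv j = a j := by
      rw [← e1 j, hMt]; rfl
    have h2 : - α j - βv j = -s := by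
      rw [← e2 j, hMt]; rfl
    have hαj : (0:ℝ) ≤ α j := hy _
    have hβj : (0:ℝ) ≤ βv j := hy _
    rw [abs_le]
    constructor <;> linarith

lemma dot_expand {ny nz : ℕ} (d qv qd : Fin ny → ℝ) (Q : Matrix (Fin ny) (Fin nz) ℝ)
    (z : Fin nz → ℝ) (S : ℝ) :
    d ⬝ᵥ (qv + Q.mulVec z + S • qd)
      = d ⬝ᵥ qv + (Qᵀ.mulVec d) ⬝ᵥ z + S * (d ⬝ᵥ qd) := by
  rw [dotProduct_add, dotProduct_add, dotProduct_smul,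
    Matrix.dotProduct_mulVec, ← Matrix.mulVec_transpose]
  simp [smul_eq_mul]

lemma row_expand {nf ny nz : ℕ} (B : Matrix (Fin nf) (Fin ny) ℝ)
    (qv qd : Fin ny → ℝ) (Q : Matrix (Fin ny) (Fin nz) ℝ)
    (z : Fin nz → ℝ) (S : ℝ) (i : Fin nf) :
    B.mulVec (qv + Q.mulVec z + S • qd) i
      = B.mulVec qv i + (Qᵀ.mulVec (B i)) ⬝ᵥ z + S * B.mulVec qd i := by
  show B i ⬝ᵥ (qv + Q.mulVec z + S • qd) = _
  rw [dotProduct_add, dotProduct_add, dotProduct_smul,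
    Matrix.dotProduct_mulVec, ← Matrix.mulVec_transpose]
  rfl

lemma Fx_row {nf nz : ℕ} (G : Matrix (Fin nf) (Fin nz) ℝ) (z : Fin nz → ℝ) (i : Fin nf) :
    G.mulVec z i = G i ⬝ᵥ z := rfl

/-- **Proposition 8 (primal non-affine recourse adaptation for two-stage linear
optimization with ℓ₁ penalty).**
For the two-stage linear evaluation function `g(x,z) = cᵀx + min{dᵀy : By ≥ f(x)+F(x)z}`
with ℓ₁ penalty and polyhedral support, under complete and bounded recourse, the set
`Ȳ_P` obtained from the decision rule `y(z) = q + Qz + q†‖z‖₁`: (i) is contained in `Y`;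
(ii) is feasible for every `x ∈ X` and `υ > g(x,0)`; and (iii) admits the explicit
linear-robust-counterpart representation. -/
theorem primal_nonaffine_recourse_two_stage {nx ny nz nf nh : ℕ}
    (c : Fin nx → ℝ) (d : Fin ny → ℝ) (B : Matrix (Fin nf) (Fin ny) ℝ)
    (f : (Fin nx → ℝ) →ᵃ[ℝ] (Fin nf → ℝ))
    (F : (Fin nx → ℝ) →ᵃ[ℝ] Matrix (Fin nf) (Fin nz) ℝ)
    -- polyhedral support:
    (H : Matrix (Fin nh) (Fin nz) ℝ) (h : Fin nh → ℝ) (hh : 0 ≤ h)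
    (hZne : ∃ z : Fin nz → ℝ, H.mulVec z ≤ h)
    -- complete and bounded recourse:
    (hcomplete : ∀ v : Fin nf → ℝ, ∃ y : Fin ny → ℝ, v ≤ B.mulVec y)
    (hbounded : ¬ ∃ y : Fin ny → ℝ, 0 ≤ B.mulVec y ∧ d ⬝ᵥ y < 0)
    -- the evaluation function:
    (g : (Fin nx → ℝ) → (Fin nz → ℝ) → ℝ)
    (hg : ∀ x z, g x z = c ⬝ᵥ x + sInf {v : ℝ | ∃ y : Fin ny → ℝ,
        f x + (F x).mulVec z ≤ B.mulVec y ∧ v = d ⬝ᵥ y})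
    (X : Set (Fin nx → ℝ))
    -- the exact feasible set `Y` and the primal approximation `Ȳ_P`:
    (Y YbarP : Set ((Fin nx → ℝ) × ℝ × ℝ))
    (hY : Y = {q : (Fin nx → ℝ) × ℝ × ℝ | q.1 ∈ X ∧ 0 ≤ q.2.2 ∧
      ∃ y : (Fin nz → ℝ) → (Fin ny → ℝ), ∀ z : Fin nz → ℝ, H.mulVec z ≤ h →
        (c ⬝ᵥ q.1 + d ⬝ᵥ y z - q.2.2 * ∑ i, |z i| ≤ q.2.1 ∧
         f q.1 + (F q.1).mulVec z ≤ B.mulVec (y z))})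
    (hYbarP : YbarP = {q : (Fin nx → ℝ) × ℝ × ℝ | q.1 ∈ X ∧ 0 ≤ q.2.2 ∧
      ∃ (qv : Fin ny → ℝ) (Q : Matrix (Fin ny) (Fin nz) ℝ) (qd : Fin ny → ℝ),
        (∀ z : Fin nz → ℝ, H.mulVec z ≤ h →
          c ⬝ᵥ q.1 + d ⬝ᵥ (qv + Q.mulVec z + (∑ i, |z i|) • qd)
            - q.2.2 * ∑ i, |z i| ≤ q.2.1) ∧
        (∀ z : Fin nz → ℝ, H.mulVec z ≤ h →
          f q.1 + (F q.1).mulVec z ≤ B.mulVec (qv + Q.mulVec z + (∑ i, |z i|) • qd)) ∧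
        0 ≤ q.2.2 - d ⬝ᵥ qd ∧ 0 ≤ B.mulVec qd}) :
    -- (i) `Ȳ_P` is a safe approximation of `Y`:
    YbarP ⊆ Y ∧
    -- (ii) feasibility above the nominal value:
    (∀ x ∈ X, ∀ υ : ℝ, g x 0 < υ → ∃ k : ℝ, 0 ≤ k ∧ (x, υ, k) ∈ YbarP) ∧
    -- (iii) explicit representation:
    YbarP = {q : (Fin nx → ℝ) × ℝ × ℝ | q.1 ∈ X ∧ 0 ≤ q.2.2 ∧
      ∃ (qv : Fin ny → ℝ) (Q : Matrix (Fin ny) (Fin nz) ℝ) (qd : Fin ny → ℝ)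
        (w0 : Fin nh → ℝ) (w : Fin nf → Fin nh → ℝ),
        0 ≤ w0 ∧ (∀ i, 0 ≤ w i) ∧
        c ⬝ᵥ q.1 + d ⬝ᵥ qv + h ⬝ᵥ w0 ≤ q.2.1 ∧
        (∀ j : Fin nz, -(q.2.2 - d ⬝ᵥ qd) ≤ (Hᵀ.mulVec w0 - Qᵀ.mulVec d) j ∧
          (Hᵀ.mulVec w0 - Qᵀ.mulVec d) j ≤ q.2.2 - d ⬝ᵥ qd) ∧
        (∀ i : Fin nf, f q.1 i + h ⬝ᵥ w i ≤ B.mulVec qv i) ∧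
        (∀ (i : Fin nf) (j : Fin nz),
          -(B.mulVec qd i) ≤ (Hᵀ.mulVec (w i)) j - F q.1 i j + (Qᵀ.mulVec (B i)) j ∧
          (Hᵀ.mulVec (w i)) j - F q.1 i j + (Qᵀ.mulVec (B i)) j ≤ B.mulVec qd i)} := by
  constructor
  · -- (i)
    intro p hp
    rw [hYbarP] at hp
    obtain ⟨hpX, hpk, qv, Q, qd, h1, h2, _, _⟩ := hp
    rw [hY]
    exact ⟨hpX, hpk, fun z => qv + Q.mulVec z + (∑ i, |z i|) • qd,
      fun z hz => ⟨h1 z hz, h2 z hz⟩⟩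
  constructor
  · -- (ii)
    intro x hx υ hυ
    have hS : {v : ℝ | ∃ y : Fin ny → ℝ,
        f x + (F x).mulVec 0 ≤ B.mulVec y ∧ v = d ⬝ᵥ y}.Nonempty := by
      obtain ⟨y, hy⟩ := hcomplete (f x + (F x).mulVec 0)
      exact ⟨d ⬝ᵥ y, y, hy, rfl⟩
    rw [hg x 0] at hυ
    have hlt : sInf {v : ℝ | ∃ y : Fin ny → ℝ,
        f x + (F x).mulVec 0 ≤ B.mulVec y ∧ v = d ⬝ᵥ y} < υ - c ⬝ᵥ x := by linarith
    obtain ⟨v, hvmem, hvlt⟩ := exists_lt_of_csInf_lt hS hlt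
    obtain ⟨y0, hy0, rfl⟩ := hvmem
    rw [Matrix.mulVec_zero, add_zero] at hy0
    set V : Fin nf → ℝ := fun i => ∑ j, |F x i j| with hV
    obtain ⟨qd, hqd⟩ := hcomplete V
    have hVnn : ∀ i, (0:ℝ) ≤ V i := fun i => Finset.sum_nonneg fun j _ => abs_nonneg _
    have hBqd : (0 : Fin nf → ℝ) ≤ B.mulVec qd := fun i => le_trans (hVnn i) (hqd i)
    refine ⟨max 0 (d ⬝ᵥ qd), le_max_left _ _, ?_⟩
    rw [hYbarP]
    refine ⟨hx, le_max_left _ _, y0, 0, qd, ?_, ?_, ?_, hBqd⟩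
    · intro z _
      have hSz : (0:ℝ) ≤ ∑ i, |z i| := Finset.sum_nonneg fun i _ => abs_nonneg _
      have hd : d ⬝ᵥ (y0 + (0 : Matrix (Fin ny) (Fin nz) ℝ).mulVec z + (∑ i, |z i|) • qd)
          = d ⬝ᵥ y0 + (∑ i, |z i|) * (d ⬝ᵥ qd) := by
        rw [Matrix.zero_mulVec]
        rw [dotProduct_add, dotProduct_add, dotProduct_smul]
        simp [smul_eq_mul]
      have hkk : d ⬝ᵥ qd ≤ max 0 (d ⬝ᵥ qd) := le_max_right _ _
      have : (∑ i, |z i|) * (d ⬝ᵥ qd) - (max 0 (d ⬝ᵥ qd)) * ∑ i, |z i| ≤ 0 := by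
        nlinarith
      rw [hd]
      linarith
    · intro z _
      intro i
      have hSz : (0:ℝ) ≤ ∑ j, |z j| := Finset.sum_nonneg fun j _ => abs_nonneg _
      have hrhs : B.mulVec (y0 + (0 : Matrix (Fin ny) (Fin nz) ℝ).mulVec z
            + (∑ j, |z j|) • qd) i
          = B.mulVec y0 i + (∑ j, |z j|) * B.mulVec qd i := by
        rw [Matrix.zero_mulVec]
        rw [Matrix.mulVec_add, Matrix.mulVec_add, Matrix.mulVec_smul]
        simp [smul_eq_mul]
      have hFz : (F x).mulVec z i ≤ (∑ j, |z j|) * V i := by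
        calc (F x).mulVec z i = ∑ j, F x i j * z j := rfl
          _ ≤ ∑ j, |F x i j| * |z j| := by
              refine Finset.sum_le_sum fun j _ => ?_
              calc F x i j * z j ≤ |F x i j * z j| := le_abs_self _
                _ = |F x i j| * |z j| := abs_mul _ _
          _ ≤ ∑ j, |F x i j| * (∑ j', |z j'|) := by
              refine Finset.sum_le_sum fun j _ => ?_
              exact mul_le_mul_of_nonneg_left
                (Finset.single_le_sum (fun j' _ => abs_nonneg (z j')) (Finset.mem_univ j))
                (abs_nonneg _)
          _ = (∑ j', |z j'|) * V i := by rw [hV, ← Finset.sum_mul, mul_comm]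
      have hby0 := hy0 i
      have hqdi : V i ≤ B.mulVec qd i := hqd i
      have : (∑ j, |z j|) * V i ≤ (∑ j, |z j|) * B.mulVec qd i :=
        mul_le_mul_of_nonneg_left hqdi hSz
      show f x i + (F x).mulVec z i ≤ _
      rw [hrhs]
      linarith
    · show (0:ℝ) ≤ max 0 (d ⬝ᵥ qd) - d ⬝ᵥ qd
      have := le_max_right 0 (d ⬝ᵥ qd)
      linarith
  · -- (iii)
    rw [hYbarP]
    ext ⟨x, υ, k⟩
    simp only [Set.mem_setOf_eq]
    constructor
    · rintro ⟨hxX, hk, qv, Q, qd, h1, h2, h3, h4⟩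
      refine ⟨hxX, hk, qv, Q, qd, ?_⟩
      have hc1 : ∀ z : Fin nz → ℝ, H.mulVec z ≤ h →
          (Qᵀ.mulVec d) ⬝ᵥ z - (k - d ⬝ᵥ qd) * (∑ j, |z j|)
            ≤ υ - c ⬝ᵥ x - d ⬝ᵥ qv := by
        intro z hz
        have h1' := h1 z hz
        rw [dot_expand] at h1'
        nlinarith
      obtain ⟨w0, hw0, hw0b, hw0s⟩ := robust_l1_dual H h hZne _ _ _ h3 hc1
      have hci : ∀ i : Fin nf, ∀ z : Fin nz → ℝ, H.mulVec z ≤ h →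
          (F x i - Qᵀ.mulVec (B i)) ⬝ᵥ z - (B.mulVec qd i) * (∑ j, |z j|)
            ≤ B.mulVec qv i - f x i := by
        intro i z hz
        have h2' := h2 z hz i
        rw [row_expand] at h2'
        simp only [Pi.add_apply] at h2'
        rw [Fx_row] at h2'
        rw [sub_dotProduct]
        linarith
      choose wr hwr1 hwr2 hwr3 using fun i =>
        robust_l1_dual H h hZne _ _ _ (h4 i) (hci i)
      refine ⟨w0, wr, hw0, hwr1, ?_, ?_, ?_, ?_⟩
      · linarith
      · intro j
        have := hw0s j
        rw [abs_le] at this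
        simp only [Pi.sub_apply]
        constructor <;> linarith [this.1, this.2]
      · intro i
        have := hwr2 i
        linarith
      · intro i j
        have := hwr3 i j
        rw [abs_le] at this
        have h1' := this.1
        have h2' := this.2
        simp only [Pi.sub_apply] at h1' h2'
        constructor <;> linarith
    · rintro ⟨hxX, hk, qv, Q, qd, w0, wr, hw0, hwr0, hobj, hbound0, hrow, hbrow⟩
      have hhw0 : (0:ℝ) ≤ h ⬝ᵥ w0 :=
        Finset.sum_nonneg fun i _ => mul_nonneg (hh i) (hw0 i)
      have hhwr : ∀ i, (0:ℝ) ≤ h ⬝ᵥ wr i :=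
        fun i => Finset.sum_nonneg fun r _ => mul_nonneg (hh r) (hwr0 i r)
      rcases Nat.eq_zero_or_pos nz with hnz | hnz
      · -- degenerate case: no uncertainty
        subst hnz
        refine ⟨hxX, hk, qv, Q, 0, ?_, ?_, ?_, ?_⟩
        · intro z _
          have hz0 : (∑ i : Fin 0, |z i|) = 0 := by simp
          have hQz : Q.mulVec z = 0 := by
            funext i; simp [Matrix.mulVec, dotProduct]
          rw [hz0, hQz]
          simp only [zero_smul, add_zero, mul_zero, sub_zero]
          linarith
        · intro z _
          intro i
          have hz0 : (∑ j : Fin 0, |z j|) = 0 := by simp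
          have hQz : Q.mulVec z = 0 := by
            funext r; simp [Matrix.mulVec, dotProduct]
          have hFz : (F x).mulVec z = 0 := by
            funext r; simp [Matrix.mulVec, dotProduct]
          rw [hz0, hQz, hFz]
          simp only [zero_smul, add_zero, Pi.add_apply, Pi.zero_apply]
          have := hrow i
          have := hhwr i
          linarith
        · simp [hk]
        · simp
      · -- nondegenerate case
        set j₀ : Fin nz := ⟨0, hnz⟩ with hj₀
        have hs0 : (0:ℝ) ≤ k - d ⬝ᵥ qd := by
          have := hbound0 j₀
          linarith [this.1, this.2]
        have hsi : ∀ i, (0:ℝ) ≤ B.mulVec qd i := by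
          intro i
          have := hbrow i j₀
          linarith [this.1, this.2]
        refine ⟨hxX, hk, qv, Q, qd, ?_, ?_, hs0, hsi⟩
        · intro z hz
          have key := robust_l1_weak H h (Qᵀ.mulVec d) (k - d ⬝ᵥ qd)
            (υ - c ⬝ᵥ x - d ⬝ᵥ qv) w0 hw0 (by linarith) ?_ z hz
          · rw [dot_expand]
            nlinarith
          · intro j
            rw [abs_le]
            have := hbound0 j
            simp only [Pi.sub_apply] at this
            constructor <;> linarith [this.1, this.2]
        · intro z hz
          intro i
          have key := robust_l1_weak H h (F x i - Qᵀ.mulVec (B i)) (B.mulVec qd i)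
            (B.mulVec qv i - f x i) (wr i) (hwr0 i) (by linarith [hrow i]) ?_ z hz
          · rw [sub_dotProduct] at key
            show f x i + (F x).mulVec z i ≤ _
            rw [row_expand, Fx_row]
            linarith
          · intro j
            rw [abs_le]
            have := hbrow i j
            simp only [Pi.sub_apply, sub_dotProduct] at *
            constructor <;> linarith [this.1, this.2]
end

section
/- Consider the two-stage linear evaluation function g(x,z) = cᵀx + min{dᵀy : y ∈ ℝ^{n_y}, By ≥ f(x) + F(x)z} with ℓ₁-norm penalty and polyhedral support Z = {z : Hz ≤ h}, h ≥ 0, under complete and bounded recourse for the linear system (for every v there exists y with By ≥ v, and no y satisfies By ≥ 0 with dᵀy < 0). Let Ȳ_P = {(x,υ,k) ∈ X × ℝ × ℝ₊ : ∃ q ∈ ℝ^{n_y}, Q ∈ ℝ^{n_y×n_z}, q† ∈ ℝ^{n_y} such that cᵀx + dᵀ(q + Qz + q†‖z‖₁) − k‖z‖₁ ≤ υ for all z ∈ Z; B(q + Qz + q†‖z‖₁) ≥ f(x) + F(x)z for all z ∈ Z; k − dᵀq† ≥ 0; Bq† ≥ 0}, and let Ȳ_D = {(x,υ,k) ∈ X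 × ℝ × ℝ₊ : ∃ π ∈ ℝ^{n_h}, Π ∈ ℝ^{n_h×n_f} such that for all ρ ∈ P: cᵀx + ρᵀf(x) + (π + Πρ)ᵀh ≤ υ; −k·1 ≤ Hᵀ(π + Πρ) − F(x)ᵀρ ≤ k·1; and π + Πρ ≥ 0}, where P = {ρ ∈ ℝ^{n_f}₊ : Bᵀρ = d}. Then Ȳ_P ⊆ Ȳ_D; that is, the affine dual recourse adaptation is at least as tight an approximation as the non-affine primal recourse adaptation. -/
open Matrix

set_option linter.unusedSectionVars false


namespace FarkasAux

variable {α : Type*} [Fintype α]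

/-- membership in the cone generated by a list of vectors. -/
def InCone : List (α → ℝ) → (α → ℝ) → Prop
  | [], w => w = 0
  | v :: L, w => ∃ t : ℝ, 0 ≤ t ∧ InCone L (w - t • v)

lemma incone_cons {v : α → ℝ} {L : List (α → ℝ)} {w : α → ℝ} :
    InCone (v :: L) w ↔ ∃ t : ℝ, 0 ≤ t ∧ InCone L (w - t • v) := Iff.rfl

lemma proj_step (v y : α → ℝ) (hvy : 0 < v ⬝ᵥ y) :
    ∀ (L : List (α → ℝ)) (w : α → ℝ),
      (∀ u ∈ L, u ⬝ᵥ y ≤ 0) →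
      InCone (L.map (fun u => u - ((u ⬝ᵥ y) / (v ⬝ᵥ y)) • v))
        (w - ((w ⬝ᵥ y) / (v ⬝ᵥ y)) • v) →
      0 < w ⬝ᵥ y → InCone (v :: L) w := by
  intro L
  induction L with
  | nil =>
      intro w _ hIC hw
      refine ⟨(w ⬝ᵥ y) / (v ⬝ᵥ y), le_of_lt (div_pos hw hvy), ?_⟩
      simpa [InCone, sub_eq_zero] using hIC
  | cons u L ih =>
      intro w hle hIC hw
      obtain ⟨t, ht, h2⟩ := hIC
      have key : (w - t • u) - (((w - t • u) ⬝ᵥ y) / (v ⬝ᵥ y)) • v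
          = (w - ((w ⬝ᵥ y) / (v ⬝ᵥ y)) • v) - t • (u - ((u ⬝ᵥ y) / (v ⬝ᵥ y)) • v) := by
        have : (w - t • u) ⬝ᵥ y = w ⬝ᵥ y - t * (u ⬝ᵥ y) := by
          simp [sub_dotProduct, smul_dotProduct, smul_eq_mul]
        rw [this]
        rw [sub_div]
        module
      have h2' : InCone (L.map (fun u => u - ((u ⬝ᵥ y) / (v ⬝ᵥ y)) • v))
          ((w - t • u) - (((w - t • u) ⬝ᵥ y) / (v ⬝ᵥ y)) • v) := by
        rw [key]; exact h2
      have hwtu : 0 < (w - t • u) ⬝ᵥ y := by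
        have huy : u ⬝ᵥ y ≤ 0 := hle u (List.mem_cons_self)
        have : (w - t • u) ⬝ᵥ y = w ⬝ᵥ y - t * (u ⬝ᵥ y) := by
          simp [sub_dotProduct, smul_dotProduct, smul_eq_mul]
        rw [this]
        nlinarith
      have := ih (w - t • u) (fun u' hu' => hle u' (List.mem_cons_of_mem _ hu')) h2' hwtu
      obtain ⟨s, hs, h3⟩ := this
      exact ⟨s, hs, t, ht, by
        have : w - s • v - t • u = w - t • u - s • v := by module
        rw [this]; exact h3⟩

/-- Homogeneous Farkas alternative. -/
lemma farkas_cone : ∀ (n : ℕ) (L : List (α → ℝ)), L.length = n → ∀ (w : α → ℝ),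
    InCone L w ∨ ∃ y : α → ℝ, (∀ v ∈ L, v ⬝ᵥ y ≤ 0) ∧ 0 < w ⬝ᵥ y := by
  intro n
  induction n with
  | zero =>
      intro L hL w
      rw [List.length_eq_zero_iff] at hL
      subst hL
      by_cases hw : w = 0
      · exact Or.inl hw
      · refine Or.inr ⟨w, by simp, ?_⟩
        have : 0 ≤ w ⬝ᵥ w := Finset.sum_nonneg fun i _ => mul_self_nonneg (w i)
        rcases this.lt_or_eq with h | h
        · exact h
        · exact absurd ((dotProduct_self_eq_zero).mp h.symm) hw
  | succ n ih =>
      intro L hL w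
      match L, hL with
      | v :: L, hL =>
        have hLn : L.length = n := by simpa using hL
        rcases ih L hLn w with hIC | ⟨y, hy, hwy⟩
        · exact Or.inl ⟨0, le_refl 0, by simpa using hIC⟩
        · by_cases hvy : v ⬝ᵥ y ≤ 0
          · refine Or.inr ⟨y, ?_, hwy⟩
            intro u hu
            rcases List.mem_cons.mp hu with rfl | hu
            · exact hvy
            · exact hy u hu
          · push_neg at hvy
            set proj : (α → ℝ) → (α → ℝ) := fun u => u - ((u ⬝ᵥ y) / (v ⬝ᵥ y)) • v with hproj
            have hlen : (L.map proj).length = n := by simpa using hLn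
            rcases ih (L.map proj) hlen (proj w) with hIC | ⟨y', hy', hwy'⟩
            · exact Or.inl (proj_step v y hvy L w hy hIC hwy)
            · -- construct y''
              refine Or.inr ⟨y' - ((v ⬝ᵥ y') / (v ⬝ᵥ y)) • y, ?_, ?_⟩
              · intro u hu
                rcases List.mem_cons.mp hu with rfl | hu
                · have : u ⬝ᵥ (y' - ((u ⬝ᵥ y') / (u ⬝ᵥ y)) • y)
                      = u ⬝ᵥ y' - ((u ⬝ᵥ y') / (u ⬝ᵥ y)) * (u ⬝ᵥ y) := by
                    simp [dotProduct_sub, dotProduct_smul, smul_eq_mul]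
                  rw [this]
                  have hne : (u ⬝ᵥ y) ≠ 0 := ne_of_gt hvy
                  field_simp
                  simp
                · have h1 : (proj u) ⬝ᵥ y' ≤ 0 := hy' (proj u) (List.mem_map.mpr ⟨u, hu, rfl⟩)
                  have : u ⬝ᵥ (y' - ((v ⬝ᵥ y') / (v ⬝ᵥ y)) • y) = (proj u) ⬝ᵥ y' := by
                    simp only [hproj, dotProduct_sub, dotProduct_smul,
                      sub_dotProduct, smul_dotProduct, smul_eq_mul]
                    have hne : (v ⬝ᵥ y) ≠ 0 := ne_of_gt hvy
                    field_simp
                  rw [this]; exact h1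
              · have : w ⬝ᵥ (y' - ((v ⬝ᵥ y') / (v ⬝ᵥ y)) • y) = (proj w) ⬝ᵥ y' := by
                  simp only [hproj, dotProduct_sub, dotProduct_smul,
                    sub_dotProduct, smul_dotProduct, smul_eq_mul]
                  have hne : (v ⬝ᵥ y) ≠ 0 := ne_of_gt hvy
                  field_simp
                rw [this]; exact hwy'

end FarkasAux

namespace FarkasAux
variable {α : Type*} [Fintype α]

lemma incone_map_coeff {ι : Type*} [Fintype ι] [DecidableEq ι] (g : ι → α → ℝ) :
    ∀ (l : List ι) (w : α → ℝ), InCone (l.map g) w →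
      ∃ lam : ι → ℝ, (∀ i, 0 ≤ lam i) ∧ w = ∑ i, lam i • g i := by
  intro l
  induction l with
  | nil =>
      intro w hw
      exact ⟨0, fun i => le_refl 0, by simpa [InCone] using hw⟩
  | cons i l ih =>
      intro w hw
      obtain ⟨t, ht, h2⟩ := hw
      obtain ⟨lam, hlam, hsum⟩ := ih _ h2
      refine ⟨fun j => lam j + if j = i then t else 0, ?_, ?_⟩
      · intro j
        by_cases hj : j = i
        · subst hj; simpa using add_nonneg (hlam j) ht
        · simpa [hj] using hlam j
      · have : ∑ j, (lam j + if j = i then t else 0) • g j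
            = (∑ j, lam j • g j) + ∑ j, (if j = i then t • g j else 0) := by
          rw [← Finset.sum_add_distrib]
          congr 1; funext j
          by_cases hj : j = i <;> simp [hj, add_smul]
        rw [this, Finset.sum_ite_eq' Finset.univ i (fun j => t • g j)]
        simp only [Finset.mem_univ, if_true]
        rw [← hsum]
        abel

/-- Affine Farkas lemma: if the system `M u ≤ mv` is feasible and implies `a ⬝ᵥ u ≤ b`,
then there are nonnegative multipliers certifying it. -/
lemma farkas_affine {ι κ : Type*} [Fintype ι] [Fintype κ] [DecidableEq ι]
    (M : Matrix ι κ ℝ) (mv : ι → ℝ) (a : κ → ℝ) (b : ℝ)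
    (hfeas : ∃ u, M.mulVec u ≤ mv)
    (himp : ∀ u, M.mulVec u ≤ mv → a ⬝ᵥ u ≤ b) :
    ∃ lam : ι → ℝ, (∀ i, 0 ≤ lam i) ∧ Mᵀ.mulVec lam = a ∧ mv ⬝ᵥ lam ≤ b := by
  classical
  set g : ι → (κ ⊕ Unit) → ℝ := fun i => Sum.elim (M i) (fun _ => mv i) with hg
  set e : (κ ⊕ Unit) → ℝ := Sum.elim 0 (fun _ => 1) with he
  set tg : (κ ⊕ Unit) → ℝ := Sum.elim a (fun _ => b) with htg
  set L : List ((κ ⊕ Unit) → ℝ) := e :: (Finset.univ.toList.map g) with hLdef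
  rcases farkas_cone L.length L rfl tg with hIC | ⟨y, hy, hty⟩
  · -- extract multipliers
    obtain ⟨t, ht, h2⟩ := hIC
    obtain ⟨lam, hlam, hsum⟩ := incone_map_coeff g Finset.univ.toList (tg - t • e) h2
    refine ⟨lam, hlam, ?_, ?_⟩
    · funext j
      have := congrFun hsum (Sum.inl j)
      simp only [Pi.sub_apply, Pi.smul_apply, htg, he, Sum.elim_inl, smul_eq_mul,
        Pi.zero_apply, mul_zero, sub_zero, Finset.sum_apply] at this
      rw [Matrix.mulVec]
      show (fun i => Mᵀ j i) ⬝ᵥ lam = a j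
      rw [dotProduct]
      rw [this]
      apply Finset.sum_congr rfl
      intro i _
      simp [hg, Matrix.transpose_apply, mul_comm]
    · have := congrFun hsum (Sum.inr ())
      simp only [Pi.sub_apply, Pi.smul_apply, htg, he, Sum.elim_inr, smul_eq_mul,
        mul_one, Finset.sum_apply] at this
      have hsum2 : mv ⬝ᵥ lam = b - t := by
        rw [dotProduct, this]
        apply Finset.sum_congr rfl
        intro i _
        simp [hg, mul_comm]
      rw [hsum2]; linarith
  · -- derive contradiction
    exfalso
    set u : κ → ℝ := fun j => y (Sum.inl j) with hu
    set s : ℝ := y (Sum.inr ()) with hs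
    have hse : e ⬝ᵥ y = s := by
      rw [dotProduct, Fintype.sum_sum_type]
      simp [he, hs]
    have hs0 : s ≤ 0 := by
      rw [← hse]; exact hy e (List.mem_cons_self)
    have hgi : ∀ i : ι, M i ⬝ᵥ u + mv i * s ≤ 0 := by
      intro i
      have := hy (g i) (List.mem_cons_of_mem _ (List.mem_map.mpr
        ⟨i, by simp, rfl⟩))
      rw [dotProduct, Fintype.sum_sum_type] at this
      simpa [hg, dotProduct, hu, hs] using this
    have hty' : 0 < a ⬝ᵥ u + b * s := by
      rw [dotProduct, Fintype.sum_sum_type] at hty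
      simpa [htg, dotProduct, hu, hs] using hty
    obtain ⟨u₀, hu₀⟩ := hfeas
    rcases hs0.lt_or_eq with hslt | hseq
    · -- s < 0 : scaled u is feasible
      set r : ℝ := -s with hr
      have hr0 : 0 < r := by simp [hr]; linarith
      have hfeas' : M.mulVec (r⁻¹ • u) ≤ mv := by
        intro i
        have h1 := hgi i
        have : M.mulVec (r⁻¹ • u) i = r⁻¹ * (M i ⬝ᵥ u) := by
          simp [Matrix.mulVec_smul, Matrix.mulVec, smul_eq_mul]
        rw [this]
        rw [inv_mul_le_iff₀ hr0]
        have h3 : r * mv i = -(mv i * s) := by rw [hr]; ring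
        linarith
      have := himp _ hfeas'
      have hau : a ⬝ᵥ (r⁻¹ • u) = r⁻¹ * (a ⬝ᵥ u) := by
        simp [dotProduct_smul, smul_eq_mul]
      rw [hau, inv_mul_le_iff₀ hr0] at this
      have h3 : r * b = -(b * s) := by rw [hr]; ring
      linarith
    · -- s = 0 : recession direction
      have hau : 0 < a ⬝ᵥ u := by rw [hseq] at hty'; simpa using hty'
      have hMu : ∀ i, M i ⬝ᵥ u ≤ 0 := by
        intro i; have := hgi i; rw [hseq] at this; simpa using this
      set τ : ℝ := max 0 ((b + 1 - a ⬝ᵥ u₀) / (a ⬝ᵥ u)) with hτ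
      have hτ0 : 0 ≤ τ := le_max_left _ _
      have hfeas' : M.mulVec (u₀ + τ • u) ≤ mv := by
        intro i
        have : M.mulVec (u₀ + τ • u) i = M.mulVec u₀ i + τ * (M i ⬝ᵥ u) := by
          simp [Matrix.mulVec_add, Matrix.mulVec_smul, Matrix.mulVec, smul_eq_mul]
        rw [this]
        have := hu₀ i
        nlinarith [hMu i]
      have h2 := himp _ hfeas'
      have ha2 : a ⬝ᵥ (u₀ + τ • u) = a ⬝ᵥ u₀ + τ * (a ⬝ᵥ u) := by
        simp [dotProduct_add, dotProduct_smul, smul_eq_mul]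
      rw [ha2] at h2
      have hτ2 : (b + 1 - a ⬝ᵥ u₀) / (a ⬝ᵥ u) ≤ τ := le_max_right _ _
      rw [div_le_iff₀ hau] at hτ2
      nlinarith

end FarkasAux

namespace FarkasAux

/-- LP duality for an ℓ₁-penalized linear function over a nonempty polyhedron. -/
lemma l1_duality {nz nh : ℕ} (H : Matrix (Fin nh) (Fin nz) ℝ) (h : Fin nh → ℝ)
    (hZne : ∃ z : Fin nz → ℝ, H.mulVec z ≤ h)
    (a : Fin nz → ℝ) (t b : ℝ) (ht : 0 ≤ t)
    (hyp : ∀ z : Fin nz → ℝ, H.mulVec z ≤ h → a ⬝ᵥ z - t * ∑ i, |z i| ≤ b) :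
    ∃ lam : Fin nh → ℝ, (∀ l, 0 ≤ lam l) ∧ h ⬝ᵥ lam ≤ b ∧
      ∀ j, |Hᵀ.mulVec lam j - a j| ≤ t := by
  classical
  set M : Matrix (Fin nh ⊕ (Fin nz ⊕ Fin nz)) (Fin nz ⊕ Fin nz) ℝ :=
    fun r c =>
      Sum.elim (fun i => Sum.elim (fun j => H i j) (fun _ => 0) c)
        (Sum.elim
          (fun j => Sum.elim (fun j' => if j' = j then (1:ℝ) else 0)
            (fun j' => if j' = j then -1 else 0) c)
          (fun j => Sum.elim (fun j' => if j' = j then (-1:ℝ) else 0)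
            (fun j' => if j' = j then -1 else 0) c)) r with hM
  set mv : Fin nh ⊕ (Fin nz ⊕ Fin nz) → ℝ := Sum.elim h 0 with hmv
  set ab : Fin nz ⊕ Fin nz → ℝ := Sum.elim a (fun _ => -t) with hab
  -- row computations for `mulVec`
  have hrow1 : ∀ (u : Fin nz ⊕ Fin nz → ℝ) (i : Fin nh),
      M.mulVec u (Sum.inl i) = H.mulVec (fun j => u (Sum.inl j)) i := by
    intro u i
    simp [hM, Matrix.mulVec, dotProduct, Fintype.sum_sum_type]
  have hrow2 : ∀ (u : Fin nz ⊕ Fin nz → ℝ) (j : Fin nz),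
      M.mulVec u (Sum.inr (Sum.inl j)) = u (Sum.inl j) - u (Sum.inr j) := by
    intro u j
    simp [hM, Matrix.mulVec, dotProduct, Fintype.sum_sum_type, ite_mul,
      Finset.sum_ite_eq', sub_eq_add_neg]
  have hrow3 : ∀ (u : Fin nz ⊕ Fin nz → ℝ) (j : Fin nz),
      M.mulVec u (Sum.inr (Sum.inr j)) = -u (Sum.inl j) - u (Sum.inr j) := by
    intro u j
    simp [hM, Matrix.mulVec, dotProduct, Fintype.sum_sum_type, ite_mul,
      Finset.sum_ite_eq', sub_eq_add_neg]
  have hfeas : ∃ u, M.mulVec u ≤ mv := by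
    obtain ⟨z₀, hz₀⟩ := hZne
    refine ⟨Sum.elim z₀ (fun j => |z₀ j|), ?_⟩
    intro r
    rcases r with i | (j | j)
    · rw [hrow1]
      simpa [hmv] using hz₀ i
    · rw [hrow2]
      simp [hmv]
      exact le_abs_self _
    · rw [hrow3]
      simp [hmv, sub_nonpos]
      exact neg_le_abs _
  have himp : ∀ u, M.mulVec u ≤ mv → ab ⬝ᵥ u ≤ b := by
    intro u hu
    set z : Fin nz → ℝ := fun j => u (Sum.inl j) with hz
    set w : Fin nz → ℝ := fun j => u (Sum.inr j) with hw
    have hzfeas : H.mulVec z ≤ h := by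
      intro i
      have := hu (Sum.inl i)
      rw [hrow1] at this
      simpa [hmv] using this
    have habs : ∀ j, |z j| ≤ w j := by
      intro j
      have h1 := hu (Sum.inr (Sum.inl j))
      have h2 := hu (Sum.inr (Sum.inr j))
      rw [hrow2] at h1
      rw [hrow3] at h2
      simp [hmv] at h1 h2
      rw [abs_le]
      constructor <;> linarith
    have hdp : ab ⬝ᵥ u = a ⬝ᵥ z - t * ∑ j, w j := by
      rw [dotProduct, Fintype.sum_sum_type]
      have e1 : ∑ j, ab (Sum.inl j) * u (Sum.inl j) = a ⬝ᵥ z := by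
        simp [hab, dotProduct, hz]
      have e2 : ∑ j, ab (Sum.inr j) * u (Sum.inr j) = -(t * ∑ j, w j) := by
        simp [hab, hw, Finset.mul_sum]
      rw [e1, e2, ← sub_eq_add_neg]
    rw [hdp]
    have h1 := hyp z hzfeas
    have h2 : t * ∑ j, |z j| ≤ t * ∑ j, w j :=
      mul_le_mul_of_nonneg_left (Finset.sum_le_sum fun j _ => habs j) ht
    linarith
  obtain ⟨lam, hlam0, hMT, hmvlam⟩ := farkas_affine M mv ab b hfeas himp
  set lH : Fin nh → ℝ := fun i => lam (Sum.inl i) with hlH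
  set lp : Fin nz → ℝ := fun j => lam (Sum.inr (Sum.inl j)) with hlp
  set lm : Fin nz → ℝ := fun j => lam (Sum.inr (Sum.inr j)) with hlm
  have hcol1 : ∀ j, Hᵀ.mulVec lH j + lp j - lm j = a j := by
    intro j
    have := congrFun hMT (Sum.inl j)
    rw [Matrix.mulVec, dotProduct, Fintype.sum_sum_type] at this
    simp only [hab, Sum.elim_inl] at this
    rw [← this]
    simp [hM, Matrix.mulVec, dotProduct, Fintype.sum_sum_type, ite_mul,
      Finset.sum_ite_eq, Finset.sum_ite_eq', hlH, hlp, hlm, Matrix.transpose_apply,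
      sub_eq_add_neg, Matrix.transpose, Matrix.of_apply]
    all_goals ring
  have hcol2 : ∀ j, lp j + lm j = t := by
    intro j
    have := congrFun hMT (Sum.inr j)
    rw [Matrix.mulVec, dotProduct, Fintype.sum_sum_type] at this
    simp only [hab, Sum.elim_inr] at this
    have h2 : -lp j - lm j = -t := by
      rw [← this]
      simp [hM, Matrix.mulVec, dotProduct, Fintype.sum_sum_type, ite_mul,
        Finset.sum_ite_eq, Finset.sum_ite_eq', hlp, hlm, sub_eq_add_neg, Matrix.transpose,
        Matrix.of_apply]
      all_goals ring
    linarith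
  refine ⟨lH, fun l => hlam0 _, ?_, ?_⟩
  · have : mv ⬝ᵥ lam = h ⬝ᵥ lH := by
      rw [dotProduct, Fintype.sum_sum_type]
      simp [hmv, dotProduct, hlH]
    linarith [hmvlam, this.symm.le, this.le]
  · intro j
    have h1 := hcol1 j
    have h2 := hcol2 j
    have hp := hlam0 (Sum.inr (Sum.inl j))
    have hm := hlam0 (Sum.inr (Sum.inr j))
    rw [abs_le]
    constructor <;> [skip; skip] <;>
      · simp only [hlp, hlm] at h1 h2
        linarith

end FarkasAux

/-- **Theorem 5 (the affine dual adaptation dominates the primal non-affine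
adaptation).**
For the two-stage linear evaluation function `g(x,z) = cᵀx + min{dᵀy : By ≥ f(x)+F(x)z}`
with ℓ₁ penalty and polyhedral support, under complete and bounded recourse, the primal
non-affine approximation `Ȳ_P` is contained in the affine dual approximation `Ȳ_D`. -/
theorem affine_dual_dominates_primal_nonaffine {nx ny nz nf nh : ℕ}
    (c : Fin nx → ℝ) (d : Fin ny → ℝ) (B : Matrix (Fin nf) (Fin ny) ℝ)
    (f : (Fin nx → ℝ) →ᵃ[ℝ] (Fin nf → ℝ))
    (F : (Fin nx → ℝ) →ᵃ[ℝ] Matrix (Fin nf) (Fin nz) ℝ)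
    -- polyhedral support:
    (H : Matrix (Fin nh) (Fin nz) ℝ) (h : Fin nh → ℝ) (hh : 0 ≤ h)
    (hZne : ∃ z : Fin nz → ℝ, H.mulVec z ≤ h)
    -- complete and bounded recourse:
    (hcomplete : ∀ v : Fin nf → ℝ, ∃ y : Fin ny → ℝ, v ≤ B.mulVec y)
    (hbounded : ¬ ∃ y : Fin ny → ℝ, 0 ≤ B.mulVec y ∧ d ⬝ᵥ y < 0)
    (X : Set (Fin nx → ℝ))
    (YbarP YbarD : Set ((Fin nx → ℝ) × ℝ × ℝ))
    -- the primal non-affine recourse approximation: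
    (hYbarP : YbarP = {q : (Fin nx → ℝ) × ℝ × ℝ | q.1 ∈ X ∧ 0 ≤ q.2.2 ∧
      ∃ (qv : Fin ny → ℝ) (Q : Matrix (Fin ny) (Fin nz) ℝ) (qd : Fin ny → ℝ),
        (∀ z : Fin nz → ℝ, H.mulVec z ≤ h →
          c ⬝ᵥ q.1 + d ⬝ᵥ (qv + Q.mulVec z + (∑ i, |z i|) • qd)
            - q.2.2 * ∑ i, |z i| ≤ q.2.1) ∧
        (∀ z : Fin nz → ℝ, H.mulVec z ≤ h →
          f q.1 + (F q.1).mulVec z ≤ B.mulVec (qv + Q.mulVec z + (∑ i, |z i|) • qd)) ∧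
        0 ≤ q.2.2 - d ⬝ᵥ qd ∧ 0 ≤ B.mulVec qd})
    -- the affine dual recourse approximation, with dual uncertainty set
    -- `P = {ρ ≥ 0 : Bᵀρ = d}`:
    (hYbarD : YbarD = {q : (Fin nx → ℝ) × ℝ × ℝ | q.1 ∈ X ∧ 0 ≤ q.2.2 ∧
      ∃ (π : Fin nh → ℝ) (Pm : Matrix (Fin nh) (Fin nf) ℝ),
        ∀ ρ : Fin nf → ℝ, 0 ≤ ρ → Bᵀ.mulVec ρ = d →
          (c ⬝ᵥ q.1 + ρ ⬝ᵥ f q.1 + (π + Pm.mulVec ρ) ⬝ᵥ h ≤ q.2.1 ∧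
           (∀ j : Fin nz,
             -q.2.2 ≤ (Hᵀ.mulVec (π + Pm.mulVec ρ) - (F q.1)ᵀ.mulVec ρ) j ∧
             (Hᵀ.mulVec (π + Pm.mulVec ρ) - (F q.1)ᵀ.mulVec ρ) j ≤ q.2.2) ∧
           0 ≤ π + Pm.mulVec ρ)}) :
    YbarP ⊆ YbarD := by
  subst hYbarP hYbarD
  rintro ⟨x, υ, k⟩ ⟨hX, hk, qv, Q, qd, hw1, hw2, hkd, hBqd⟩
  simp only [Set.mem_setOf_eq] at *
  refine ⟨hX, hk, ?_⟩
  -- dual multipliers for the objective constraint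
  obtain ⟨lam0, hlam0nn, hlam0h, hlam0col⟩ :=
    FarkasAux.l1_duality H h hZne (Matrix.vecMul d Q) (k - d ⬝ᵥ qd)
      (υ - c ⬝ᵥ x - d ⬝ᵥ qv) hkd
      (by
        intro z hz
        have h1 := hw1 z hz
        have h2 : d ⬝ᵥ (qv + Q.mulVec z + (∑ i, |z i|) • qd)
            = d ⬝ᵥ qv + Matrix.vecMul d Q ⬝ᵥ z + (∑ i, |z i|) * (d ⬝ᵥ qd) := by
          rw [dotProduct_add, dotProduct_add, Matrix.dotProduct_mulVec,
            dotProduct_smul, smul_eq_mul]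
        rw [h2] at h1
        linarith)
  -- dual multipliers for each recourse constraint row
  have key : ∀ i : Fin nf, ∃ lam : Fin nh → ℝ, (∀ l, 0 ≤ lam l) ∧
      h ⬝ᵥ lam ≤ B.mulVec qv i - f x i ∧
      ∀ j, |Hᵀ.mulVec lam j - (F x i - (B * Q) i) j| ≤ B.mulVec qd i := by
    intro i
    refine FarkasAux.l1_duality H h hZne (F x i - (B * Q) i) (B.mulVec qd i)
      (B.mulVec qv i - f x i) (hBqd i) ?_
    intro z hz
    have h1 := hw2 z hz i
    have h2 : B.mulVec (qv + Q.mulVec z + (∑ i, |z i|) • qd) i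
        = B.mulVec qv i + (B * Q).mulVec z i + (∑ i, |z i|) * B.mulVec qd i := by
      rw [Matrix.mulVec_add, Matrix.mulVec_add, Matrix.mulVec_smul,
        Matrix.mulVec_mulVec]
      simp [smul_eq_mul]
    have h3 : (F x i - (B * Q) i) ⬝ᵥ z = (F x).mulVec z i - (B * Q).mulVec z i := by
      rw [sub_dotProduct]; rfl
    rw [h3]
    simp only [Pi.add_apply] at h1
    rw [h2] at h1
    linarith
  choose lamF hFnn hFh hFcol using key
  refine ⟨lam0, fun l i => lamF i l, ?_⟩
  intro ρ hρ hρd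
  have hρd' : Matrix.vecMul ρ B = d := by rw [← Matrix.mulVec_transpose]; exact hρd
  set Pm : Matrix (Fin nh) (Fin nf) ℝ := fun l i => lamF i l with hPm
  have hPme : ∀ l, (lam0 + Pm.mulVec ρ) l = lam0 l + ∑ i, ρ i * lamF i l := by
    intro l
    simp only [Pi.add_apply, Matrix.mulVec, dotProduct, hPm]
    congr 1
    exact Finset.sum_congr rfl fun i _ => mul_comm _ _
  refine ⟨?_, ?_, ?_⟩
  · -- objective inequality
    have e1 : (lam0 + Pm.mulVec ρ) ⬝ᵥ h = h ⬝ᵥ lam0 + ∑ i, ρ i * (h ⬝ᵥ lamF i) := by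
      rw [add_dotProduct, dotProduct_comm lam0 h]
      congr 1
      calc Pm.mulVec ρ ⬝ᵥ h
          = ∑ l, (∑ i, lamF i l * ρ i) * h l := rfl
        _ = ∑ l, ∑ i, lamF i l * ρ i * h l :=
            Finset.sum_congr rfl fun l _ => Finset.sum_mul _ _ _
        _ = ∑ i, ∑ l, lamF i l * ρ i * h l := Finset.sum_comm
        _ = ∑ i, ρ i * (h ⬝ᵥ lamF i) := by
            refine Finset.sum_congr rfl fun i _ => ?_
            show _ = ρ i * ∑ l, h l * lamF i l
            rw [Finset.mul_sum]
            exact Finset.sum_congr rfl fun l _ => by ring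
    have e2 : ∑ i, ρ i * (h ⬝ᵥ lamF i) ≤ ∑ i, ρ i * (B.mulVec qv i - f x i) :=
      Finset.sum_le_sum fun i _ => mul_le_mul_of_nonneg_left (hFh i) (hρ i)
    have e3 : ∑ i, ρ i * (B.mulVec qv i - f x i) = d ⬝ᵥ qv - ρ ⬝ᵥ f x := by
      have : ρ ⬝ᵥ B.mulVec qv = d ⬝ᵥ qv := by
        rw [Matrix.dotProduct_mulVec, hρd']
      rw [← this]
      simp [dotProduct, mul_sub, Finset.sum_sub_distrib]
    rw [e1]
    rw [e3] at e2
    linarith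
  · -- the ℓ∞ bound
    intro j
    have hBQ : ∑ i, ρ i * (B * Q) i j = Matrix.vecMul d Q j := by
      have : Matrix.vecMul ρ (B * Q) = Matrix.vecMul d Q := by
        rw [← Matrix.vecMul_vecMul, hρd']
      have h2 := congrFun this j
      rw [← h2]
      simp [Matrix.vecMul, dotProduct]
    have hBqdsum : ∑ i, ρ i * B.mulVec qd i = d ⬝ᵥ qd := by
      have : ρ ⬝ᵥ B.mulVec qd = d ⬝ᵥ qd := by
        rw [Matrix.dotProduct_mulVec, hρd']
      rw [← this]
      simp [dotProduct]
    have hVal : (Hᵀ.mulVec (lam0 + Pm.mulVec ρ) - (F x)ᵀ.mulVec ρ) j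
        = (Hᵀ.mulVec lam0 j - Matrix.vecMul d Q j)
          + ∑ i, ρ i * (Hᵀ.mulVec (lamF i) j - (F x i - (B * Q) i) j) := by
      have h1 : Hᵀ.mulVec (lam0 + Pm.mulVec ρ) j
          = Hᵀ.mulVec lam0 j + ∑ i, ρ i * Hᵀ.mulVec (lamF i) j := by
        rw [Matrix.mulVec_add]
        simp only [Pi.add_apply]
        congr 1
        calc Hᵀ.mulVec (Pm.mulVec ρ) j
            = ∑ l, Hᵀ j l * ∑ i, lamF i l * ρ i := rfl
          _ = ∑ l, ∑ i, Hᵀ j l * (lamF i l * ρ i) :=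
              Finset.sum_congr rfl fun l _ => Finset.mul_sum _ _ _
          _ = ∑ i, ∑ l, Hᵀ j l * (lamF i l * ρ i) := Finset.sum_comm
          _ = ∑ i, ρ i * Hᵀ.mulVec (lamF i) j := by
              refine Finset.sum_congr rfl fun i _ => ?_
              show _ = ρ i * ∑ l, Hᵀ j l * lamF i l
              rw [Finset.mul_sum]
              exact Finset.sum_congr rfl fun l _ => by ring
      have h2 : (F x)ᵀ.mulVec ρ j = ∑ i, ρ i * F x i j := by
        show ∑ i, (F x)ᵀ j i * ρ i = _
        exact Finset.sum_congr rfl fun i _ => by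
          rw [Matrix.transpose_apply]; ring
      simp only [Pi.sub_apply]
      rw [h1, h2]
      have h3 : ∑ i, ρ i * (Hᵀ.mulVec (lamF i) j - (F x i j - (B * Q) i j))
          = ∑ i, ρ i * Hᵀ.mulVec (lamF i) j - ∑ i, ρ i * F x i j
            + ∑ i, ρ i * (B * Q) i j := by
        simp only [mul_sub]
        rw [Finset.sum_sub_distrib, Finset.sum_sub_distrib]
        ring
      rw [h3, hBQ]
      ring
    have habs0 := hlam0col j
    have habsS : |∑ i, ρ i * (Hᵀ.mulVec (lamF i) j - (F x i - (B * Q) i) j)|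
        ≤ d ⬝ᵥ qd := by
      calc |∑ i, ρ i * (Hᵀ.mulVec (lamF i) j - (F x i - (B * Q) i) j)|
          ≤ ∑ i, |ρ i * (Hᵀ.mulVec (lamF i) j - (F x i - (B * Q) i) j)| :=
            Finset.abs_sum_le_sum_abs _ _
        _ ≤ ∑ i, ρ i * B.mulVec qd i := by
            apply Finset.sum_le_sum
            intro i _
            rw [abs_mul, abs_of_nonneg (hρ i)]
            exact mul_le_mul_of_nonneg_left (hFcol i j) (hρ i)
        _ = d ⬝ᵥ qd := hBqdsum
    rw [abs_le] at habs0 habsS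
    constructor <;> (rw [hVal]; obtain ⟨a1, a2⟩ := habs0; obtain ⟨b1, b2⟩ := habsS; linarith)
  · -- nonnegativity
    intro l
    rw [Pi.zero_apply, hPme l]
    have : 0 ≤ ∑ i, ρ i * lamF i l :=
      Finset.sum_nonneg fun i _ => mul_nonneg (hρ i) (hFnn i l)
    linarith [hlam0nn l]
end
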